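/- Denote by $p$ Euler's quintic and let $f : [0, \infty) \to \mathbb{R}$ be the implicit function with $p(r_2, f(r_2)) = 0$ and $f(0) = 1$. Then $f$ is strictly increasing and $f(r_2) > r_2$ for all $r_2 \geq 0$; in particular $f(r_2) > 1$ for $r_2 > 0$. -/
import Mathlib


open Set

/-- Euler's quintic. -/
def eulerP (r2 r3 : ℝ) : ℝ :=
  -r2^5 + 2*r2^4*r3 - 2*r2^4 - r2^3*r3^2 + 4*r2^3*r3 - r2^3 + r2^2*r3^3 - r2^2*r3^2
    + r2^2*r3 - r2^2 - 2*r2*r3^4 - 4*r2*r3^3 - 5*r2*r3^2 - 4*r2*r3 - 2*r2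
    + r3^5 + 2*r3^4 + r3^3 - r3^2 - 2*r3 - 1

lemma eulerP_keyT (a b y : ℝ) (ha : 0 ≤ a) (hb : 0 ≤ b) (hay : a ≤ y) (hby : b ≤ y) :
    0 < 2+4*y+5*y^2+4*y^3+2*y^4 + (a+b)*(1-y)*(1+y^2) + (a^2+a*b+b^2)*(y^2-4*y+1)
      + (a^3+a^2*b+a*b^2+b^3)*2*(1-y) + (a^4+a^3*b+a^2*b^2+a*b^3+b^4) := by
  nlinarith [mul_nonneg ha hb, sq_nonneg (a-b), sq_nonneg (a+b-2*y), sq_nonneg (y-1),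
    mul_nonneg (sub_nonneg.2 hay) (sub_nonneg.2 hby), sq_nonneg (a*b-y*y), sq_nonneg (a-y), sq_nonneg (b-y),
    mul_nonneg (mul_nonneg ha hb) (mul_nonneg (sub_nonneg.2 hay) (sub_nonneg.2 hby)),
    mul_nonneg ha (sub_nonneg.2 hby), mul_nonneg hb (sub_nonneg.2 hay)]

/-- For fixed `y`, `x ↦ eulerP x y` is strictly decreasing on `[0, y]`. -/
lemma eulerP_strictAnti (a b y : ℝ) (ha : 0 ≤ a) (hb : 0 ≤ b) (hay : a ≤ y) (hby : b ≤ y)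
    (hab : a < b) : eulerP b y < eulerP a y := by
  have hT := eulerP_keyT a b y ha hb hay hby
  have h : eulerP a y - eulerP b y = (b-a) * (2+4*y+5*y^2+4*y^3+2*y^4 + (a+b)*(1-y)*(1+y^2)
      + (a^2+a*b+b^2)*(y^2-4*y+1) + (a^3+a^2*b+a*b^2+b^3)*2*(1-y) + (a^4+a^3*b+a^2*b^2+a*b^3+b^4)) := by
    unfold eulerP; ring
  nlinarith [mul_pos (sub_pos.2 hab) hT]

lemma eulerP_diag (r : ℝ) : eulerP r r = -(r+1)^4 := by unfold eulerP; ring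

/-- the implicit function `f` with `p(r2, f r2) = 0` and `f 0 = 1` is
strictly increasing on `[0, ∞)`, satisfies `f r2 > r2` for `r2 ≥ 0`, and `f r2 > 1`
for `r2 > 0`. -/
theorem euler_implicit_function_monotone (f : ℝ → ℝ)
    (hcont : ContinuousOn f (Ici 0))
    (hroot : ∀ r2 : ℝ, 0 ≤ r2 → eulerP r2 (f r2) = 0)
    (hf0 : f 0 = 1) :
    StrictMonoOn f (Ici 0) ∧
    (∀ r2 : ℝ, 0 ≤ r2 → r2 < f r2) ∧
    (∀ r2 : ℝ, 0 < r2 → 1 < f r2) := by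
  -- f x ≠ x on Ici 0
  have hne : ∀ x : ℝ, 0 ≤ x → f x ≠ x := by
    intro x hx hfx
    have h := hroot x hx
    rw [hfx, eulerP_diag] at h
    nlinarith [pow_pos (show (0:ℝ) < x+1 by linarith) 4]
  -- f x > x on Ici 0
  have hgt : ∀ x : ℝ, 0 ≤ x → x < f x := by
    intro x hx
    by_contra hle
    push_neg at hle
    have hlt : f x < x := lt_of_le_of_ne hle (hne x hx)
    -- IVT for g = f - id on [0, x]
    have hg : ContinuousOn (fun t => f t - t) (Icc 0 x) :=
      (hcont.mono (Icc_subset_Ici_self)).sub continuousOn_id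
    have h0 : (fun t => f t - t) 0 = 1 := by simp [hf0]
    have hmem : (0 : ℝ) ∈ Icc (f x - x) ((fun t => f t - t) 0) := by
      refine ⟨by simp; linarith, by simp [h0]⟩
    obtain ⟨c, hc, hceq⟩ := intermediate_value_Icc' hx hg hmem
    exact hne c hc.1 (by linarith [sub_eq_zero.mp hceq])
  -- injectivity on Ici 0
  have hinj : InjOn f (Ici 0) := by
    intro a ha b hb hfab
    by_contra hne'
    rcases lt_or_gt_of_ne hne' with h | h
    · have h1 := hroot a ha
      have h2 := hroot b hb
      rw [hfab] at h1
      have := eulerP_strictAnti a b (f b) ha hb (by linarith [hgt a ha, hfab ▸ (hgt a ha)])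
        (le_of_lt (hgt b hb)) h
      linarith
    · have h1 := hroot a ha
      have h2 := hroot b hb
      rw [← hfab] at h2
      have := eulerP_strictAnti b a (f a) hb ha (by linarith [hgt b hb, hfab ▸ (hgt b hb)])
        (le_of_lt (hgt a ha)) h
      linarith
  -- strict monotonicity
  have hmono : StrictMonoOn f (Ici 0) := by
    intro a ha b hb hab
    have ha' : (0:ℝ) ≤ a := ha
    have hb' : (0:ℝ) ≤ b := hb
    set M := max b 2 with hM
    have hbM : b ≤ M := le_max_left _ _
    have h2M : (2:ℝ) ≤ M := le_max_right _ _
    have h0M : (0:ℝ) ≤ M := by linarith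
    have hsub : Icc (0:ℝ) M ⊆ Ici 0 := Icc_subset_Ici_self
    have hfM : f 0 ≤ f M := by
      have := hgt M h0M
      rw [hf0]; linarith
    have := ContinuousOn.strictMonoOn_of_injOn_Icc h0M hfM (hcont.mono hsub) (hinj.mono hsub)
    exact this ⟨ha', by linarith⟩ ⟨hb', hbM⟩ hab
  refine ⟨hmono, hgt, fun x hx => ?_⟩
  have := hmono (self_mem_Ici) (mem_Ici.2 hx.le) hx
  rwa [hf0] at this
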